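/- Let M be a maximum-cardinality matching in a finite bipartite graph G = (X ⊔ Y, E), let X_0 be the set of vertices of X unmatched by M, and let X_S, X_L, Y_S, Y_L be the partitions of X and Y induced by the maximal M-alternating sequence starting at X_0. Then: (a) there are no edges between X_S and Y_L; (b) the induced subgraph G[X_S, Y_S] is Y-path-saturated; (c) the induced subgraph G[X_L, Y_L] admits a matching saturating X_L (namely the edges of M with both endpoints in X_L ∪ Y_L). -/

import Mathlib

attribute [local instance] Classical.propDecidable

variable {V : Type*}

/-- `X, Y` form a bipartition of the vertex set of the simple graph `G`:
they are disjoint, cover all vertices, and every edge joins `X` to `Y`. -/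
def IsBipartition [Fintype V] (G : SimpleGraph V) (X Y : Finset V) : Prop :=
  Disjoint X Y ∧ X ∪ Y = Finset.univ ∧
    ∀ ⦃u v : V⦄, G.Adj u v → (u ∈ X ∧ v ∈ Y) ∨ (u ∈ Y ∧ v ∈ X)

/-- `M` is a matching of `G` all of whose edges go from `X'` to `Y'`
(i.e. a matching of the induced subgraph `G[X', Y']`), recorded as a set of
pairwise vertex-disjoint adjacent pairs. -/
def IsBipMatching (G : SimpleGraph V) (X' Y' : Finset V) (M : Finset (V × V)) : Prop :=
  (∀ p ∈ M, p.1 ∈ X' ∧ p.2 ∈ Y' ∧ G.Adj p.1 p.2) ∧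
  ∀ p ∈ M, ∀ q ∈ M, p ≠ q → p.1 ≠ q.1 ∧ p.2 ≠ q.2

/-- `M` is envy-free w.r.t. `X`: no unmatched vertex of `X` is adjacent to a
matched vertex on the `Y`-side of `M`. -/
def EnvyFree (G : SimpleGraph V) (X : Finset V) (M : Finset (V × V)) : Prop :=
  ∀ x ∈ X, x ∉ M.image Prod.fst → ∀ y ∈ M.image Prod.snd, ¬ G.Adj x y

/-- The (bipartite) graph `G[X ∪ Y]` is `Y`-path-saturated: for some `k ≥ 1` there are
partitions `X = X_0 ⊔ ⋯ ⊔ X_k` and `Y = Y_1 ⊔ ⋯ ⊔ Y_k` such that for `1 ≤ i ≤ k`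
there is a perfect matching between `X_i` and `Y_i`, and every vertex of `Y_i` is
adjacent to some vertex of `X_{i-1}`. -/
def YPathSaturated (G : SimpleGraph V) (X Y : Finset V) : Prop :=
  ∃ k : ℕ, 1 ≤ k ∧ ∃ A B : ℕ → Finset V,
    (∀ i ∈ Finset.range (k + 1), ∀ j ∈ Finset.range (k + 1), i ≠ j → Disjoint (A i) (A j)) ∧
    (∀ i ∈ Finset.Icc 1 k, ∀ j ∈ Finset.Icc 1 k, i ≠ j → Disjoint (B i) (B j)) ∧
    X = (Finset.range (k + 1)).biUnion A ∧
    Y = (Finset.Icc 1 k).biUnion B ∧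
    (∀ i ∈ Finset.Icc 1 k, ∃ f : V → V,
      Set.BijOn f (A i) (B i) ∧ ∀ x ∈ A i, G.Adj x (f x)) ∧
    (∀ i ∈ Finset.Icc 1 k, ∀ y ∈ B i, ∃ x ∈ A (i - 1), G.Adj x y)

/-- One step of the `M`-alternating sequence. The state is `(X_i, Y_i, Yacc)` where
`Yacc = Y_1 ∪ ⋯ ∪ Y_i`. The next `Y`-level consists of the vertices of `Y` adjacent
along non-matching edges to `X_i` and not used before; the next `X`-level consists of
their `M`-partners. -/
noncomputable def altStep (G : SimpleGraph V) (M : Finset (V × V)) (Y : Finset V)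
    (p : Finset V × Finset V × Finset V) : Finset V × Finset V × Finset V :=
  let Ynext := (Y.filter fun y => ∃ x ∈ p.1, G.Adj x y ∧ (x, y) ∉ M) \ p.2.2
  let Xnext := (M.filter fun q => q.2 ∈ Ynext).image Prod.fst
  (Xnext, Ynext, p.2.2 ∪ Ynext)

/-- The `M`-alternating sequence starting at `X_0` = the set of vertices of `X`
unmatched by `M`. `(altSeq G M X Y i) = (X_i, Y_i, Y_1 ∪ ⋯ ∪ Y_i)`. -/
noncomputable def altSeq (G : SimpleGraph V) (M : Finset (V × V)) (X Y : Finset V) :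
    ℕ → Finset V × Finset V × Finset V
  | 0 => (X \ M.image Prod.fst, ∅, ∅)
  | i + 1 => altStep G M Y (altSeq G M X Y i)

section
variable (G : SimpleGraph V) (M : Finset (V × V)) (X Y : Finset V)

lemma altY_succ (i : ℕ) : (altSeq G M X Y (i+1)).2.1 =
    (Y.filter fun y => ∃ x ∈ (altSeq G M X Y i).1, G.Adj x y ∧ (x, y) ∉ M) \ (altSeq G M X Y i).2.2 := rfl

lemma altX_succ (i : ℕ) : (altSeq G M X Y (i+1)).1 =
    (M.filter fun q => q.2 ∈ (altSeq G M X Y (i+1)).2.1).image Prod.fst := rfl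

lemma altAcc_succ (i : ℕ) : (altSeq G M X Y (i+1)).2.2 =
    (altSeq G M X Y i).2.2 ∪ (altSeq G M X Y (i+1)).2.1 := rfl

variable {G M X Y}

/-- membership in Yacc_i means membership in some Y_j with j ≤ i -/
lemma acc_mem {i : ℕ} {y : V} (h : y ∈ (altSeq G M X Y i).2.2) :
    ∃ j ≤ i, y ∈ (altSeq G M X Y j).2.1 := by
  induction i with
  | zero => simp [altSeq] at h
  | succ i ih =>
    rw [altAcc_succ, Finset.mem_union] at h
    rcases h with h | h
    · obtain ⟨j, hj, hy⟩ := ih h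
      exact ⟨j, hj.trans (Nat.le_succ i), hy⟩
    · exact ⟨i+1, le_refl _, h⟩

lemma mem_acc {j i : ℕ} (hj : j ≤ i) {y : V} (h : y ∈ (altSeq G M X Y j).2.1) :
    y ∈ (altSeq G M X Y i).2.2 := by
  induction i with
  | zero => interval_cases j; simp [altSeq] at h
  | succ i ih =>
    rw [altAcc_succ, Finset.mem_union]
    rcases Nat.lt_succ_iff_lt_or_eq.mp (Nat.lt_succ_of_le hj) with h' | rfl
    · exact Or.inl (ih (Nat.lt_succ_iff.mp h'))
    · exact Or.inr h

lemma Ynext_not_acc {i : ℕ} {y : V} (h : y ∈ (altSeq G M X Y (i+1)).2.1) :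
    y ∉ (altSeq G M X Y i).2.2 := by
  rw [altY_succ, Finset.mem_sdiff] at h; exact h.2

lemma Y_disjoint {i j : ℕ} (hij : i ≠ j) : Disjoint (altSeq G M X Y i).2.1 (altSeq G M X Y j).2.1 := by
  wlog h : i < j generalizing i j
  · exact (this hij.symm (by omega)).symm
  rw [Finset.disjoint_left]
  intro y hy hy'
  obtain ⟨j', rfl⟩ : ∃ j', j = j' + 1 := ⟨j - 1, by omega⟩
  exact Ynext_not_acc hy' (mem_acc (by omega) hy)

lemma Y_sub (i : ℕ) : (altSeq G M X Y i).2.1 ⊆ Y := by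
  cases i with
  | zero => simp [altSeq]
  | succ i => rw [altY_succ]; exact (Finset.sdiff_subset).trans (Finset.filter_subset _ _)

lemma X0_mem {x : V} : x ∈ (altSeq G M X Y 0).1 ↔ x ∈ X ∧ x ∉ M.image Prod.fst := by
  simp [altSeq]

lemma Xsucc_mem {i : ℕ} {x : V} : x ∈ (altSeq G M X Y (i+1)).1 ↔
    ∃ p ∈ M, p.1 = x ∧ p.2 ∈ (altSeq G M X Y (i+1)).2.1 := by
  rw [altX_succ, Finset.mem_image]
  constructor
  · rintro ⟨p, hp, rfl⟩; rw [Finset.mem_filter] at hp; exact ⟨p, hp.1, rfl, hp.2⟩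
  · rintro ⟨p, hp, rfl, h2⟩; exact ⟨p, Finset.mem_filter.mpr ⟨hp, h2⟩, rfl⟩

end

section
variable {G : SimpleGraph V} {M : Finset (V × V)} {X Y : Finset V}

lemma match_eq_of_fst (hM : IsBipMatching G X Y M) {p q : V × V} (hp : p ∈ M) (hq : q ∈ M)
    (h : p.1 = q.1) : p = q := by
  by_contra hne; exact (hM.2 p hp q hq hne).1 h

lemma match_eq_of_snd (hM : IsBipMatching G X Y M) {p q : V × V} (hp : p ∈ M) (hq : q ∈ M)
    (h : p.2 = q.2) : p = q := by
  by_contra hne; exact (hM.2 p hp q hq hne).2 h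

lemma X_sub (hM : IsBipMatching G X Y M) (i : ℕ) : (altSeq G M X Y i).1 ⊆ X := by
  cases i with
  | zero => intro x hx; exact (X0_mem.mp hx).1
  | succ i =>
    intro x hx
    obtain ⟨p, hp, rfl, -⟩ := Xsucc_mem.mp hx
    exact (hM.1 p hp).1

lemma X_disjoint (hM : IsBipMatching G X Y M) {i j : ℕ} (hij : i ≠ j) :
    Disjoint (altSeq G M X Y i).1 (altSeq G M X Y j).1 := by
  rw [Finset.disjoint_left]
  intro x hx hx'
  match i, j with
  | 0, 0 => exact hij rfl
  | 0, j+1 =>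
    obtain ⟨p, hp, rfl, -⟩ := Xsucc_mem.mp hx'
    exact (X0_mem.mp hx).2 (Finset.mem_image.mpr ⟨p, hp, rfl⟩)
  | i+1, 0 =>
    obtain ⟨p, hp, rfl, -⟩ := Xsucc_mem.mp hx
    exact (X0_mem.mp hx').2 (Finset.mem_image.mpr ⟨p, hp, rfl⟩)
  | i+1, j+1 =>
    obtain ⟨p, hp, hpx, hpy⟩ := Xsucc_mem.mp hx
    obtain ⟨q, hq, hqx, hqy⟩ := Xsucc_mem.mp hx'
    have : p = q := match_eq_of_fst hM hp hq (hpx.trans hqx.symm)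
    subst this
    exact Finset.disjoint_left.mp (Y_disjoint (show i+1 ≠ j+1 from hij)) hpy hqy

/-- Key lemma: for `x ∈ X_i` there is a rearranged matching of the same size leaving
`x` unmatched, using only matched Y-vertices, and agreeing with `M` outside `Yacc_i`. -/
lemma alt_exists_swap (hM : IsBipMatching G X Y M) (i : ℕ) :
    ∀ x ∈ (altSeq G M X Y i).1, ∃ M' : Finset (V × V),
      IsBipMatching G X Y M' ∧ M'.card = M.card ∧ x ∉ M'.image Prod.fst ∧
      M'.image Prod.snd ⊆ M.image Prod.snd ∧
      ∀ p ∈ M, p.2 ∉ (altSeq G M X Y i).2.2 → p ∈ M' := by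
  induction i with
  | zero =>
    intro x hx
    exact ⟨M, hM, rfl, (X0_mem.mp hx).2, le_refl _, fun p hp _ => hp⟩
  | succ i ih =>
    intro x hx
    obtain ⟨p, hp, rfl, hpy⟩ := Xsucc_mem.mp hx
    set x := p.1
    set y' := p.2 with hy'
    have hxy'M : (x, y') ∈ M := by rwa [show (x, y') = p from rfl]
    have hy'acc : y' ∉ (altSeq G M X Y i).2.2 := Ynext_not_acc hpy
    have hy'filter := (Finset.mem_sdiff.mp hpy).1
    rw [Finset.mem_filter] at hy'filter
    obtain ⟨hy'Y, x'', hx'', hadj, hnm⟩ := hy'filter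
    obtain ⟨M', hM', hcard, hx''un, hsnd, hagree⟩ := ih x'' hx''
    have hxy'M' : (x, y') ∈ M' := hagree _ hxy'M hy'acc
    have hxne : x ≠ x'' := by
      rintro rfl; exact hnm hxy'M
    have hx''notin : ∀ q ∈ M', q.1 ≠ x'' := by
      intro q hq h
      exact hx''un (Finset.mem_image.mpr ⟨q, hq, h⟩)
    refine ⟨insert (x'', y') (M'.erase (x, y')), ?_, ?_, ?_, ?_, ?_⟩
    · constructor
      · intro q hq
        rcases Finset.mem_insert.mp hq with rfl | hq
        · exact ⟨X_sub hM i hx'', (hM.1 p hp).2.1, hadj⟩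
        · exact hM'.1 q (Finset.mem_of_mem_erase hq)
      · have key : ∀ q ∈ M'.erase (x, y'), (x'', y') ≠ q → (x'', y').1 ≠ q.1 ∧ (x'', y').2 ≠ q.2 := by
          intro q hq _
          have hqM' := Finset.mem_of_mem_erase hq
          refine ⟨fun h => hx''notin q hqM' h.symm, fun h => ?_⟩
          have : (x, y') = q := match_eq_of_snd hM' hxy'M' hqM' (show (x,y').2 = q.2 from h)
          exact (Finset.ne_of_mem_erase hq) this.symm
        intro q hq r hr hne
        rcases Finset.mem_insert.mp hq with rfl | hq <;> rcases Finset.mem_insert.mp hr with rfl | hr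
        · exact absurd rfl hne
        · exact key r hr hne
        · have := key q hq (Ne.symm hne); exact ⟨this.1.symm, this.2.symm⟩
        · exact hM'.2 q (Finset.mem_of_mem_erase hq) r (Finset.mem_of_mem_erase hr) hne
    · rw [Finset.card_insert_of_notMem, Finset.card_erase_of_mem hxy'M', hcard]
      · have : 0 < M.card := Finset.card_pos.mpr ⟨p, hp⟩
        omega
      · intro h
        exact hx''notin _ (Finset.mem_of_mem_erase h) rfl
    · intro h
      obtain ⟨q, hq, hq1⟩ := Finset.mem_image.mp h
      rcases Finset.mem_insert.mp hq with rfl | hq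
      · exact hxne hq1.symm
      · have : q = (x, y') := match_eq_of_fst hM' (Finset.mem_of_mem_erase hq) hxy'M' hq1
        exact (Finset.ne_of_mem_erase hq) this
    · intro z hz
      obtain ⟨q, hq, rfl⟩ := Finset.mem_image.mp hz
      rcases Finset.mem_insert.mp hq with rfl | hq
      · exact Finset.mem_image.mpr ⟨p, hp, rfl⟩
      · exact hsnd (Finset.mem_image.mpr ⟨q, Finset.mem_of_mem_erase hq, rfl⟩)
    · intro q hq hqacc
      rw [altAcc_succ, Finset.mem_union] at hqacc
      push_neg at hqacc
      have hqM' := hagree q hq hqacc.1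
      apply Finset.mem_insert_of_mem
      refine Finset.mem_erase.mpr ⟨?_, hqM'⟩
      rintro rfl
      exact hqacc.2 hpy

end

section
variable {G : SimpleGraph V} {M : Finset (V × V)} {X Y : Finset V}

lemma Y_matched (hM : IsBipMatching G X Y M)
    (hmax : ∀ M' : Finset (V × V), IsBipMatching G X Y M' → M'.card ≤ M.card)
    (i : ℕ) : (altSeq G M X Y i).2.1 ⊆ M.image Prod.snd := by
  cases i with
  | zero => simp [altSeq]
  | succ i =>
    intro y hy
    by_contra hyun
    have hfilt := (Finset.mem_sdiff.mp hy).1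
    rw [Finset.mem_filter] at hfilt
    obtain ⟨hyY, x'', hx'', hadj, -⟩ := hfilt
    obtain ⟨M', hM', hcard, hx''un, hsnd, -⟩ := alt_exists_swap hM i x'' hx''
    have hynotM' : ∀ q ∈ M', q.2 ≠ y := by
      intro q hq h
      exact hyun (hsnd (Finset.mem_image.mpr ⟨q, hq, h⟩))
    have hxnotM' : ∀ q ∈ M', q.1 ≠ x'' := fun q hq h =>
      hx''un (Finset.mem_image.mpr ⟨q, hq, h⟩)
    have hbig : IsBipMatching G X Y (insert (x'', y) M') := by
      constructor
      · intro q hq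
        rcases Finset.mem_insert.mp hq with rfl | hq
        · exact ⟨X_sub hM i hx'', hyY, hadj⟩
        · exact hM'.1 q hq
      · have key : ∀ q ∈ M', (x'', y) ≠ q → (x'', y).1 ≠ q.1 ∧ (x'', y).2 ≠ q.2 :=
          fun q hq _ => ⟨fun h => hxnotM' q hq h.symm, fun h => hynotM' q hq h.symm⟩
        intro q hq r hr hne
        rcases Finset.mem_insert.mp hq with rfl | hq <;> rcases Finset.mem_insert.mp hr with rfl | hr
        · exact absurd rfl hne
        · exact key r hr hne
        · have := key q hq (Ne.symm hne); exact ⟨this.1.symm, this.2.symm⟩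
        · exact hM'.2 q hq r hr hne
    have : (insert (x'', y) M').card = M.card + 1 := by
      rw [Finset.card_insert_of_notMem (fun h => hxnotM' _ h rfl), hcard]
    have := hmax _ hbig
    omega

lemma Y_empty_step {i : ℕ} (h : (altSeq G M X Y (i+1)).2.1 = ∅) :
    (altSeq G M X Y (i+1)).1 = ∅ ∧ (altSeq G M X Y (i+2)).2.1 = ∅ := by
  have hX : (altSeq G M X Y (i+1)).1 = ∅ := by
    rw [altX_succ, h]
    simp
  refine ⟨hX, ?_⟩
  rw [altY_succ, hX]
  simp

lemma Y_empty_stable {i : ℕ} (h : (altSeq G M X Y (i+1)).2.1 = ∅) :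
    ∀ j, i + 1 ≤ j → (altSeq G M X Y j).2.1 = ∅ ∧ (altSeq G M X Y j).1 = ∅ := by
  intro j hj
  obtain ⟨d, rfl⟩ : ∃ d, j = (i+1) + d := ⟨j - (i+1), by omega⟩
  clear hj
  induction d with
  | zero => exact ⟨h, (Y_empty_step h).1⟩
  | succ d ih =>
    have : (altSeq G M X Y (i + 1 + d + 1)).2.1 = ∅ := by
      have := (Y_empty_step (i := i + d) (by rw [show i + d + 1 = i + 1 + d from by omega]; exact ih.1)).2
      rwa [show i + d + 2 = i + 1 + d + 1 from by omega] at this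
    exact ⟨this, (Y_empty_step (i := i + 1 + d) this).1⟩

lemma exists_Y_empty [Fintype V] : ∃ i ≤ Fintype.card V, (altSeq G M X Y (i+1)).2.1 = ∅ := by
  by_contra h
  push_neg at h
  have key : ∀ i ≤ Fintype.card V + 1, i ≤ (altSeq G M X Y i).2.2.card := by
    intro i hi
    induction i with
    | zero => omega
    | succ i ih =>
      have h1 := ih (by omega)
      have hne : (altSeq G M X Y (i+1)).2.1.Nonempty :=
        h i (by omega)
      have hdisj : Disjoint (altSeq G M X Y i).2.2 (altSeq G M X Y (i+1)).2.1 := by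
        rw [Finset.disjoint_right]
        intro y hy
        exact Ynext_not_acc hy
      rw [altAcc_succ, Finset.card_union_of_disjoint hdisj]
      have := Finset.card_pos.mpr hne
      omega
    
  have := key (Fintype.card V + 1) (le_refl _)
  have := Finset.card_le_univ (altSeq G M X Y (Fintype.card V + 1)).2.2
  omega

end

/-- for a maximum-cardinality matching `M`, the partitions induced by the
maximal `M`-alternating sequence satisfy: (a) no edges between `X_S` and `Y_L`;
(b) `G[X_S, Y_S]` is `Y`-path-saturated; (c) the edges of `M` inside `G[X_L, Y_L]`
form a matching saturating `X_L`. -/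
theorem alternating_sequence_partition [Fintype V]
    (G : SimpleGraph V) (X Y : Finset V) (hBip : IsBipartition G X Y)
    (M : Finset (V × V)) (hM : IsBipMatching G X Y M)
    (hmax : ∀ M' : Finset (V × V), IsBipMatching G X Y M' → M'.card ≤ M.card)
    (XS YS XL YL : Finset V)
    (hXS : XS = X.filter fun x => ∃ i : ℕ, x ∈ (altSeq G M X Y i).1)
    (hYS : YS = Y.filter fun y => ∃ i : ℕ, y ∈ (altSeq G M X Y i).2.1)
    (hXL : XL = X \ XS) (hYL : YL = Y \ YS) :
    (∀ x ∈ XS, ∀ y ∈ YL, ¬ G.Adj x y) ∧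
    YPathSaturated G XS YS ∧
    (IsBipMatching G XL YL (M.filter fun p => p.1 ∈ XL ∧ p.2 ∈ YL) ∧
      XL ⊆ (M.filter fun p => p.1 ∈ XL ∧ p.2 ∈ YL).image Prod.fst) := by
  subst hXS hYS hXL hYL
  set XS := X.filter fun x => ∃ i : ℕ, x ∈ (altSeq G M X Y i).1 with hXS
  set YS := Y.filter fun y => ∃ i : ℕ, y ∈ (altSeq G M X Y i).2.1 with hYS
  -- no y ∈ YS comes from level 0
  have hYlvl : ∀ {y : V} {i : ℕ}, y ∈ (altSeq G M X Y i).2.1 → ∃ j : ℕ, y ∈ (altSeq G M X Y (j+1)).2.1 := by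
    intro y i hy
    cases i with
    | zero => simp [altSeq] at hy
    | succ j => exact ⟨j, hy⟩
  refine ⟨?_, ?_, ?_, ?_⟩
  · -- part (a)
    intro x hx y hy hadj
    rw [hXS, Finset.mem_filter] at hx
    obtain ⟨hxX, i, hxi⟩ := hx
    rw [Finset.mem_sdiff, hYS, Finset.mem_filter] at hy
    obtain ⟨hyY, hyNS⟩ := hy
    apply hyNS
    refine ⟨hyY, ?_⟩
    by_cases hm : (x, y) ∈ M
    · cases i with
      | zero =>
        exact absurd (Finset.mem_image.mpr ⟨(x, y), hm, rfl⟩) (X0_mem.mp hxi).2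
      | succ j =>
        obtain ⟨p, hp, hp1, hp2⟩ := Xsucc_mem.mp hxi
        have : p = (x, y) := match_eq_of_fst hM hp hm hp1
        subst this
        exact ⟨j+1, hp2⟩
    · by_cases hacc : y ∈ (altSeq G M X Y i).2.2
      · obtain ⟨j, _, hj⟩ := acc_mem hacc
        exact ⟨j, hj⟩
      · refine ⟨i+1, ?_⟩
        rw [altY_succ, Finset.mem_sdiff, Finset.mem_filter]
        exact ⟨⟨hyY, x, hxi, hadj, hm⟩, hacc⟩
  · -- part (b)
    obtain ⟨i0, hi0le, hi0⟩ := exists_Y_empty (G := G) (M := M) (X := X) (Y := Y)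
    set k := Fintype.card V + 1 with hk
    have hempty : ∀ j, k + 1 ≤ j → (altSeq G M X Y j).2.1 = ∅ ∧ (altSeq G M X Y j).1 = ∅ :=
      fun j hj => Y_empty_stable hi0 j (by omega)
    refine ⟨k, by omega, (fun i => (altSeq G M X Y i).1), (fun i => (altSeq G M X Y i).2.1),
      ?_, ?_, ?_, ?_, ?_, ?_⟩
    · exact fun i _ j _ hij => X_disjoint hM hij
    · exact fun i _ j _ hij => Y_disjoint hij
    · ext x
      rw [hXS, Finset.mem_filter, Finset.mem_biUnion]
      constructor
      · rintro ⟨hxX, i, hxi⟩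
        refine ⟨i, Finset.mem_range.mpr ?_, hxi⟩
        by_contra h
        rw [(hempty i (by omega)).2] at hxi
        exact absurd hxi (Finset.notMem_empty x)
      · rintro ⟨i, -, hxi⟩
        exact ⟨X_sub hM i hxi, i, hxi⟩
    · ext y
      rw [hYS, Finset.mem_filter, Finset.mem_biUnion]
      constructor
      · rintro ⟨hyY, i, hyi⟩
        obtain ⟨j, hyj⟩ := hYlvl hyi
        refine ⟨j+1, Finset.mem_Icc.mpr ⟨by omega, ?_⟩, hyj⟩
        by_contra h
        rw [(hempty (j+1) (by omega)).1] at hyj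
        exact absurd hyj (Finset.notMem_empty y)
      · rintro ⟨i, -, hyi⟩
        exact ⟨Y_sub i hyi, i, hyi⟩
    · -- perfect matchings
      intro i hi
      obtain ⟨j, rfl⟩ : ∃ j, i = j + 1 := ⟨i - 1, by have := (Finset.mem_Icc.mp hi).1; omega⟩
      have hf : ∀ x y : V, (x, y) ∈ M →
          (if h : ∃ y0, (x, y0) ∈ M then h.choose else x) = y := by
        intro x y hxy
        have h : ∃ y0, (x, y0) ∈ M := ⟨y, hxy⟩
        rw [dif_pos h]
        have := match_eq_of_fst hM h.choose_spec hxy (rfl : ((x, h.choose) : V × V).1 = (x, y).1)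
        exact congrArg Prod.snd this
      refine ⟨fun x => if h : ∃ y0, (x, y0) ∈ M then h.choose else x, ⟨?_, ?_, ?_⟩, ?_⟩
      · -- MapsTo
        intro x hx
        obtain ⟨p, hp, rfl, hp2⟩ := Xsucc_mem.mp hx
        simp only [Finset.coe_sort_coe, Finset.mem_coe]
        rw [hf p.1 p.2 (by rwa [show (p.1, p.2) = p from rfl])]
        exact hp2
      · -- InjOn
        intro x1 hx1 x2 hx2 heq
        obtain ⟨p, hp, rfl, -⟩ := Xsucc_mem.mp hx1
        obtain ⟨q, hq, rfl, -⟩ := Xsucc_mem.mp hx2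
        simp only at heq
        rw [hf p.1 p.2 (by rwa [show (p.1, p.2) = p from rfl]),
          hf q.1 q.2 (by rwa [show (q.1, q.2) = q from rfl])] at heq
        exact congrArg Prod.fst (match_eq_of_snd hM hp hq heq)
      · -- SurjOn
        intro y hy
        have hy' : y ∈ (altSeq G M X Y (j+1)).2.1 := hy
        obtain ⟨p, hp, hp2⟩ := Finset.mem_image.mp (Y_matched hM hmax (j+1) hy')
        refine ⟨p.1, Xsucc_mem.mpr ⟨p, hp, rfl, by rwa [hp2]⟩, ?_⟩
        simp only
        rw [hf p.1 p.2 (by rwa [show (p.1, p.2) = p from rfl])]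
        exact hp2
      · -- adjacency
        intro x hx
        obtain ⟨p, hp, rfl, -⟩ := Xsucc_mem.mp hx
        simp only
        rw [hf p.1 p.2 (by rwa [show (p.1, p.2) = p from rfl])]
        exact (hM.1 p hp).2.2
    · intro i hi y hy
      obtain ⟨j, rfl⟩ : ∃ j, i = j + 1 := ⟨i - 1, by have := (Finset.mem_Icc.mp hi).1; omega⟩
      have := (Finset.mem_sdiff.mp hy).1
      rw [Finset.mem_filter] at this
      obtain ⟨-, x, hx, hadj, -⟩ := this
      exact ⟨x, by simpa using hx, hadj⟩
  · -- part (c) matching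
    constructor
    · intro p hp
      rw [Finset.mem_filter] at hp
      exact ⟨hp.2.1, hp.2.2, (hM.1 p hp.1).2.2⟩
    · intro p hp q hq hne
      exact hM.2 p (Finset.mem_filter.mp hp).1 q (Finset.mem_filter.mp hq).1 hne
  · -- part (c) saturation
    intro x hx
    rw [Finset.mem_sdiff] at hx
    obtain ⟨hxX, hxNS⟩ := hx
    rw [hXS, Finset.mem_filter] at hxNS
    push_neg at hxNS
    have hnot := hxNS hxX
    have hx0 : x ∉ (altSeq G M X Y 0).1 := fun h => (hnot 0 h).elim
    have hxm : x ∈ M.image Prod.fst := by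
      by_contra h
      exact hx0 (X0_mem.mpr ⟨hxX, h⟩)
    obtain ⟨p, hp, hp1⟩ := Finset.mem_image.mp hxm
    have hp2YL : p.2 ∈ Y \ YS := by
      rw [Finset.mem_sdiff]
      refine ⟨(hM.1 p hp).2.1, ?_⟩
      rw [hYS, Finset.mem_filter]
      rintro ⟨-, i, hyi⟩
      obtain ⟨j, hyj⟩ := hYlvl hyi
      exact hnot (j+1) (by rw [← hp1]; exact Xsucc_mem.mpr ⟨p, hp, rfl, hyj⟩)
    refine Finset.mem_image.mpr ⟨p, Finset.mem_filter.mpr ⟨hp, ?_, hp2YL⟩, hp1⟩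
    rw [hp1, Finset.mem_sdiff]
    exact ⟨hxX, by rw [hXS, Finset.mem_filter]; rintro ⟨-, i, hxi⟩; exact hnot i hxi⟩
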